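/- Let G be a finite simple connected graph containing no C3 or C5 as a subgraph such that κ_LLY(u,v) ≥ κ > 0 for every edge uv of G. Then for every vertex x and every vertex y with d(x,y) = i (where 1 ≤ i), one has |Γ_x^+(y)| + |Γ_x^0(y)| ≤ (1 − iκ/2)·deg(y), where Γ_x^+(y) = {u ∈ N(y) : d(x,u) = d(x,y)+1} and Γ_x^0(y) = {u ∈ N(y) : d(x,u) = d(x,y)}. -/

import Mathlib

open Finset

noncomputable section

/-- The (normalized) graph Laplacian `Δf(x) = (1/deg x) ∑_{y ~ x} (f y - f x)`. -/
def graphLap {V : Type*} [Fintype V] (G : SimpleGraph V) [DecidableRel G.Adj]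
    (f : V → ℝ) (x : V) : ℝ :=
  (G.degree x : ℝ)⁻¹ * ∑ y ∈ G.neighborFinset x, (f y - f x)

/-- `f` is 1-Lipschitz with respect to the graph distance. -/
def IsLip1 {V : Type*} (G : SimpleGraph V) (f : V → ℝ) : Prop :=
  ∀ u v : V, |f u - f v| ≤ G.dist u v

/-- Lin–Lu–Yau curvature of a pair of vertices, via the limit-free
(Münch–Wojciechowski) formulation. -/
def kappaLLY {V : Type*} [Fintype V] (G : SimpleGraph V) [DecidableRel G.Adj]
    (x y : V) : ℝ :=
  sInf { r : ℝ | ∃ f : V → ℝ, IsLip1 G f ∧ f y - f x = G.dist x y ∧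
      r = (graphLap G f x - graphLap G f y) / G.dist x y }

/-- `G` contains a cycle of length `n` as a subgraph: `n` distinct vertices
arranged cyclically so that consecutive ones are adjacent. -/
def HasCycleLen {V : Type*} (G : SimpleGraph V) (n : ℕ) [NeZero n] : Prop :=
  ∃ c : Fin n → V, Function.Injective c ∧ ∀ i : Fin n, G.Adj (c i) (c (i + 1))

/-! ### Auxiliary lemmas -/

lemma mkC3 {V : Type*} {G : SimpleGraph V} {a b c : V}
    (hab : G.Adj a b) (hbc : G.Adj b c) (hca : G.Adj c a) : HasCycleLen G 3 := by
  refine ⟨![a, b, c], ?_, ?_⟩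
  · have h1 : a ≠ b := hab.ne
    have h2 : b ≠ c := hbc.ne
    have h3 : c ≠ a := hca.ne
    intro i j hij
    fin_cases i <;> fin_cases j <;> simp_all
  · intro i
    fin_cases i <;> simp [hab, hbc, hca]

lemma mkC5 {V : Type*} {G : SimpleGraph V} {a b c d e : V}
    (hab : G.Adj a b) (hbc : G.Adj b c) (hcd : G.Adj c d) (hde : G.Adj d e) (hea : G.Adj e a)
    (hac : a ≠ c) (had : a ≠ d) (hbd : b ≠ d) (hbe : b ≠ e) (hce : c ≠ e) :
    HasCycleLen G 5 := by
  refine ⟨![a, b, c, d, e], ?_, ?_⟩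
  · have h1 : a ≠ b := hab.ne
    have h2 : b ≠ c := hbc.ne
    have h3 : c ≠ d := hcd.ne
    have h4 : d ≠ e := hde.ne
    have h5 : e ≠ a := hea.ne
    intro i j hij
    fin_cases i <;> fin_cases j <;> simp_all
  · intro i
    fin_cases i <;> simp [hab, hbc, hcd, hde, hea]

lemma exists_pred' {V : Type*} {G : SimpleGraph V} (hconn : G.Connected) {x y : V} {j : ℕ}
    (h : G.dist x y = j + 1) : ∃ z, G.Adj y z ∧ G.dist x z = j := by
  obtain ⟨p, hp⟩ := hconn.exists_walk_length_eq_dist y x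
  rw [SimpleGraph.dist_comm] at hp
  rw [h] at hp
  cases p with
  | nil => simp at hp
  | cons hadj q =>
    rename_i v
    refine ⟨v, hadj, ?_⟩
    have h1 : G.dist x v ≤ j := by
      have := SimpleGraph.dist_le q
      rw [SimpleGraph.dist_comm]
      simp [SimpleGraph.Walk.length_cons] at hp
      omega
    have h2 : G.dist x y ≤ G.dist x v + 1 := by
      have ht := hconn.dist_triangle (u := x) (v := v) (w := y)
      have hd : G.dist v y = 1 := SimpleGraph.dist_eq_one_iff_adj.mpr hadj.symm
      omega
    omega

lemma exists_mid' {V : Type*} {G : SimpleGraph V} (hconn : G.Connected) {u w : V}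
    (h : G.dist u w = 2) : ∃ p, G.Adj u p ∧ G.Adj p w := by
  obtain ⟨q, hq⟩ := hconn.exists_walk_length_eq_dist u w
  rw [h] at hq
  cases q with
  | nil => simp at hq
  | cons h1 q1 =>
    cases q1 with
    | nil => simp at hq
    | cons h2 q2 =>
      rename_i a b
      have hlen : q2.length = 0 := by simp only [SimpleGraph.Walk.length_cons] at hq; omega
      have hb : b = w := SimpleGraph.Walk.eq_of_length_eq_zero hlen
      exact ⟨a, h1, hb ▸ h2⟩

lemma abs_graphLap_le_one {V : Type*} [Fintype V] (G : SimpleGraph V) [DecidableRel G.Adj]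
    (f : V → ℝ) (hf : IsLip1 G f) (v : V) : |graphLap G f v| ≤ 1 := by
  unfold graphLap
  by_cases hd : G.degree v = 0
  · have hemp : G.neighborFinset v = ∅ := by
      rwa [← Finset.card_eq_zero, SimpleGraph.card_neighborFinset_eq_degree]
    simp [hemp]
  · have hpos : (0:ℝ) < G.degree v := by exact_mod_cast Nat.pos_of_ne_zero hd
    rw [abs_mul, abs_of_nonneg (by positivity : (0:ℝ) ≤ (G.degree v : ℝ)⁻¹)]
    have h1 : |∑ w ∈ G.neighborFinset v, (f w - f v)| ≤ (G.degree v : ℝ) := by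
      calc |∑ w ∈ G.neighborFinset v, (f w - f v)| ≤ ∑ w ∈ G.neighborFinset v, |f w - f v| :=
            Finset.abs_sum_le_sum_abs _ _
        _ ≤ ∑ _w ∈ G.neighborFinset v, (1:ℝ) := by
            refine Finset.sum_le_sum fun w hw => ?_
            have hadj := (SimpleGraph.mem_neighborFinset _ _ _).mp hw
            have hle := hf w v
            rw [SimpleGraph.dist_eq_one_iff_adj.mpr hadj.symm] at hle
            simpa using hle
        _ = (G.degree v : ℝ) := by simp [SimpleGraph.card_neighborFinset_eq_degree]
    calc (G.degree v : ℝ)⁻¹ * |∑ w ∈ G.neighborFinset v, (f w - f v)| ≤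
          (G.degree v : ℝ)⁻¹ * (G.degree v : ℝ) :=
          mul_le_mul_of_nonneg_left h1 (by positivity)
      _ = 1 := inv_mul_cancel₀ (ne_of_gt hpos)

/-- Indicator-sum identity: the signed indicator sums to `P + Z - M`. -/
lemma indicator_sum {V : Type*} [Fintype V] (G : SimpleGraph V) [DecidableRel G.Adj]
    (x v : V) (k : ℕ)
    (hmem : ∀ w ∈ G.neighborFinset v,
      G.dist x w = k + 1 ∨ G.dist x w = k ∨ G.dist x w + 1 = k) :
    ∑ w ∈ G.neighborFinset v,
        (if G.dist x w = k + 1 then (1:ℝ) else if G.dist x w = k then 1 else -1)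
      = (((G.neighborFinset v).filter fun u => G.dist x u = k + 1).card : ℝ)
        + (((G.neighborFinset v).filter fun u => G.dist x u = k).card : ℝ)
        - (((G.neighborFinset v).filter fun u => G.dist x u + 1 = k).card : ℝ) := by
  have hsplit : ∀ w ∈ G.neighborFinset v,
      (if G.dist x w = k + 1 then (1:ℝ) else if G.dist x w = k then 1 else -1)
      = ((if G.dist x w = k + 1 then (1:ℝ) else 0) + (if G.dist x w = k then (1:ℝ) else 0))
        - (if G.dist x w + 1 = k then (1:ℝ) else 0) := by
    intro w hw
    rcases hmem w hw with h | h | h <;>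
      · split_ifs <;> first | (exfalso; omega) | norm_num
  rw [Finset.sum_congr rfl hsplit, Finset.sum_sub_distrib, Finset.sum_add_distrib]
  simp [Finset.sum_boole]

/-- Neighbors of a vertex at distance `k` from `x` are at distance `k±1` or `k`. -/
lemma neighbor_dist_cases {V : Type*} [Fintype V] (G : SimpleGraph V) [DecidableRel G.Adj]
    (hconn : G.Connected) (x v : V) (k : ℕ) (hv : G.dist x v = k) :
    ∀ w ∈ G.neighborFinset v,
      G.dist x w = k + 1 ∨ G.dist x w = k ∨ G.dist x w + 1 = k := by
  intro w hw
  have hadj := (SimpleGraph.mem_neighborFinset _ _ _).mp hw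
  have h1 : G.dist x w ≤ G.dist x v + G.dist v w := hconn.dist_triangle
  have h2 : G.dist x v ≤ G.dist x w + G.dist w v := hconn.dist_triangle
  have h3 : G.dist v w = 1 := SimpleGraph.dist_eq_one_iff_adj.mpr hadj
  have h4 : G.dist w v = 1 := SimpleGraph.dist_eq_one_iff_adj.mpr hadj.symm
  omega

lemma key_lemma {V : Type*} [Fintype V] (G : SimpleGraph V)
    [DecidableRel G.Adj] (hconn : G.Connected)
    (h3 : ¬ HasCycleLen G 3) (h5 : ¬ HasCycleLen G 5)
    (κ : ℝ) (hκ : 0 < κ)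
    (hcurv : ∀ u v : V, G.Adj u v → κ ≤ kappaLLY G u v) (x : V) (j : ℕ) :
    ∀ y : V, G.dist x y = j →
      ((((G.neighborFinset y).filter fun u => G.dist x u = j + 1).card : ℝ)
        + (((G.neighborFinset y).filter fun u => G.dist x u = j).card : ℝ)
        - (((G.neighborFinset y).filter fun u => G.dist x u + 1 = j).card : ℝ))
      ≤ (1 - j * κ) * G.degree y := by
  induction j with
  | zero =>
    intro y hy
    have hyx : x = y := hconn.dist_eq_zero_iff.mp hy
    subst hyx
    have h1 : (G.neighborFinset x).filter (fun u => G.dist x u = 0 + 1) =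
        G.neighborFinset x := by
      apply Finset.filter_true_of_mem
      intro u hu
      have := SimpleGraph.dist_eq_one_iff_adj.mpr ((SimpleGraph.mem_neighborFinset _ _ _).mp hu)
      omega
    have h2 : (G.neighborFinset x).filter (fun u => G.dist x u = 0) = ∅ := by
      apply Finset.filter_false_of_mem
      intro u hu h
      have heq : x = u := hconn.dist_eq_zero_iff.mp h
      exact G.irrefl (heq ▸ (SimpleGraph.mem_neighborFinset _ _ _).mp hu)
    have h2' : (G.neighborFinset x).filter (fun u => G.dist x u + 1 = 0) = ∅ := by
      apply Finset.filter_false_of_mem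
      intro u _ h
      omega
    rw [h1, h2, h2']
    simp [SimpleGraph.card_neighborFinset_eq_degree]
  | succ j ih =>
    intro y hdist
    obtain ⟨z, hyz, hxz⟩ := exists_pred' hconn hdist
    have hzy : G.Adj z y := hyz.symm
    have hdzy : G.dist z y = 1 := SimpleGraph.dist_eq_one_iff_adj.mpr hzy
    have hdegy : 0 < G.degree y := (G.degree_pos_iff_exists_adj y).mpr ⟨z, hyz⟩
    have hdegz : 0 < G.degree z := (G.degree_pos_iff_exists_adj z).mpr ⟨y, hzy⟩
    have hdegy' : (0:ℝ) < G.degree y := by exact_mod_cast hdegy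
    have hdegz' : (0:ℝ) < G.degree z := by exact_mod_cast hdegz
    obtain ⟨S, hS⟩ : ∃ S : Finset V, S = (G.neighborFinset y).filter (fun u => G.dist x u = j + 1) := ⟨_, rfl⟩
    have hmemS : ∀ u ∈ S, G.Adj y u ∧ G.dist x u = j + 1 := by
      intro u hu
      rw [hS, Finset.mem_filter, SimpleGraph.mem_neighborFinset] at hu
      exact hu
    obtain ⟨gN, hgN⟩ : ∃ gN : V → ℕ,
        gN = fun v => max (min (G.dist x v) (j + 2)) (S.sup fun u => (j + 2) - G.dist u v) :=
      ⟨_, rfl⟩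
    obtain ⟨g, hg⟩ : ∃ g : V → ℝ, g = fun v => (gN v : ℝ) := ⟨_, rfl⟩
    -- Lipschitz
    have hLipN : ∀ v w : V, gN v ≤ gN w + G.dist v w := by
      intro v w
      have ht1 : G.dist x v ≤ G.dist x w + G.dist w v := hconn.dist_triangle
      have hc : G.dist w v = G.dist v w := SimpleGraph.dist_comm
      simp only [hgN]
      apply max_le
      · have h1 : min (G.dist x v) (j + 2) ≤ min (G.dist x w) (j + 2) + G.dist v w := by omega
        exact h1.trans (Nat.add_le_add_right (le_max_left _ _) _)
      · apply Finset.sup_le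
        intro u hu
        have ht2 : G.dist u w ≤ G.dist u v + G.dist v w := hconn.dist_triangle
        have h1 : (j + 2) - G.dist u v ≤ ((j + 2) - G.dist u w) + G.dist v w := by omega
        have h2 : (j + 2) - G.dist u w ≤ S.sup fun u' => (j + 2) - G.dist u' w :=
          Finset.le_sup (f := fun u' => (j + 2) - G.dist u' w) hu
        calc (j + 2) - G.dist u v ≤ ((j + 2) - G.dist u w) + G.dist v w := h1
          _ ≤ (S.sup fun u' => (j + 2) - G.dist u' w) + G.dist v w := Nat.add_le_add_right h2 _
          _ ≤ max (min (G.dist x w) (j + 2)) (S.sup fun u' => (j + 2) - G.dist u' w)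
              + G.dist v w := Nat.add_le_add_right (le_max_right _ _) _
    have hLip : IsLip1 G g := by
      intro v w
      rw [abs_sub_le_iff]
      constructor
      · have h := hLipN v w
        have hcast : (gN v : ℝ) ≤ (gN w : ℝ) + (G.dist v w : ℝ) := by exact_mod_cast h
        simp only [hg]; linarith
      · have h := hLipN w v
        rw [SimpleGraph.dist_comm (u := w) (v := v)] at h
        have hcast : (gN w : ℝ) ≤ (gN v : ℝ) + (G.dist v w : ℝ) := by exact_mod_cast h
        simp only [hg]; linarith
    -- values
    have hdS2 : ∀ u ∈ S, 2 ≤ G.dist u z := by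
      intro u hu
      obtain ⟨hadj_yu, hdxu⟩ := hmemS u hu
      have h0 : G.dist u z ≠ 0 := by
        intro h
        have : u = z := hconn.dist_eq_zero_iff.mp h
        rw [this] at hdxu; omega
      have h1 : G.dist u z ≠ 1 := by
        intro h
        exact h3 (mkC3 (SimpleGraph.dist_eq_one_iff_adj.mp h) hzy hadj_yu)
      omega
    have hgy : gN y = j + 1 := by
      simp only [hgN]
      have h2 : (S.sup fun u => (j + 2) - G.dist u y) ≤ j + 1 := by
        apply Finset.sup_le; intro u hu
        have hd : G.dist u y = 1 :=
          SimpleGraph.dist_eq_one_iff_adj.mpr ((hmemS u hu).1).symm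
        omega
      omega
    have hgz : gN z = j := by
      simp only [hgN]
      have h2 : (S.sup fun u => (j + 2) - G.dist u z) ≤ j := by
        apply Finset.sup_le; intro u hu
        have := hdS2 u hu; omega
      omega
    have hg_le : ∀ w : V, G.dist x w ≤ j + 1 → w ∉ S → gN w ≤ j + 1 := by
      intro w hw hwS
      simp only [hgN]
      have h2 : (S.sup fun u => (j + 2) - G.dist u w) ≤ j + 1 := by
        apply Finset.sup_le; intro u hu
        have hne : u ≠ w := fun h => hwS (h ▸ hu)
        have hd0 : G.dist u w ≠ 0 := fun h => hne (hconn.dist_eq_zero_iff.mp h)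
        omega
      omega
    have hg_low : ∀ w : V, G.Adj z w → G.dist x w + 1 = j → gN w + 1 ≤ j := by
      intro w hzw hxw
      have hj1 : 1 ≤ j := by omega
      have hall : ∀ u ∈ S, (j + 2) - G.dist u w ≤ j - 1 := by
        intro u hu
        obtain ⟨hadj_yu, hdxu⟩ := hmemS u hu
        have ht : G.dist x u ≤ G.dist x w + G.dist w u := hconn.dist_triangle
        have hcwu : G.dist w u = G.dist u w := SimpleGraph.dist_comm
        have hd2 : 2 ≤ G.dist u w := by omega
        have hne2 : G.dist u w ≠ 2 := by
          intro h2'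
          obtain ⟨p, hup, hpw⟩ := exists_mid' hconn h2'
          have hyp : y ≠ p := by
            intro h; subst h
            have ht2 : G.dist x y ≤ G.dist x w + G.dist w y := hconn.dist_triangle
            have hd : G.dist w y = 1 := SimpleGraph.dist_eq_one_iff_adj.mpr hpw.symm
            omega
          have hyw : y ≠ w := by
            intro h; rw [← h] at hxw; omega
          have huw : u ≠ w := by
            intro h; rw [← h] at hxw; omega
          have huz : u ≠ z := by
            intro h; rw [h] at hdxu; omega
          have hpz : p ≠ z := by
            intro h; subst h
            exact h3 (mkC3 hup hzy hadj_yu)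
          exact h5 (mkC5 hadj_yu hup hpw hzw.symm hzy hyp hyw huw huz hpz)
        omega
      have hsup := Finset.sup_le hall
      simp only [hgN]
      omega
    have hg_geS : ∀ u ∈ S, j + 2 ≤ gN u := by
      intro u hu
      have h := Finset.le_sup (f := fun u' => (j + 2) - G.dist u' u) hu
      simp only [SimpleGraph.dist_self, Nat.sub_zero] at h
      simp only [hgN]
      omega
    -- sum bounds
    have hmem_z := neighbor_dist_cases G hconn x z j hxz
    have hmem_y := neighbor_dist_cases G hconn x y (j + 1) hdist
    have hpt_z : ∀ w ∈ G.neighborFinset z, g w - g z ≤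
        (if G.dist x w = j + 1 then (1:ℝ) else if G.dist x w = j then 1 else -1) := by
      intro w hw
      have hadj := (SimpleGraph.mem_neighborFinset _ _ _).mp hw
      rcases hmem_z w hw with h | h | h
      · rw [if_pos h]
        have hwS : w ∉ S := by
          intro hwS
          exact h3 (mkC3 hyz hadj ((hmemS w hwS).1).symm)
        have hb := hg_le w (by omega) hwS
        have hcast : (gN w : ℝ) ≤ (j : ℝ) + 1 := by exact_mod_cast hb
        have hcz : (gN z : ℝ) = (j : ℝ) := by exact_mod_cast congrArg Nat.cast hgz
        simp only [hg]; linarith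
      · rw [if_neg (by omega), if_pos h]
        have hwS : w ∉ S := by
          intro hwS
          have := (hmemS w hwS).2; omega
        have hb := hg_le w (by omega) hwS
        have hcast : (gN w : ℝ) ≤ (j : ℝ) + 1 := by exact_mod_cast hb
        have hcz : (gN z : ℝ) = (j : ℝ) := by exact_mod_cast congrArg Nat.cast hgz
        simp only [hg]; linarith
      · rw [if_neg (by omega), if_neg (by omega)]
        have hb := hg_low w hadj h
        have hcast : (gN w : ℝ) + 1 ≤ (j : ℝ) := by exact_mod_cast hb
        have hcz : (gN z : ℝ) = (j : ℝ) := by exact_mod_cast congrArg Nat.cast hgz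
        simp only [hg]; linarith
    have hpt_y : ∀ u ∈ G.neighborFinset y,
        (if G.dist x u = (j + 1) + 1 then (1:ℝ) else if G.dist x u = j + 1 then 1 else -1)
          ≤ g u - g y := by
      intro u hu
      have hcy : (gN y : ℝ) = (j : ℝ) + 1 := by exact_mod_cast congrArg Nat.cast hgy
      rcases hmem_y u hu with h | h | h
      · rw [if_pos h]
        have hlow : j + 2 ≤ gN u := by
          simp only [hgN]; omega
        have hcast : (j : ℝ) + 2 ≤ (gN u : ℝ) := by exact_mod_cast hlow
        simp only [hg]; linarith
      · rw [if_neg (by omega), if_pos h]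
        have huS : u ∈ S := by
          rw [hS, Finset.mem_filter]; exact ⟨hu, h⟩
        have hlow := hg_geS u huS
        have hcast : (j : ℝ) + 2 ≤ (gN u : ℝ) := by exact_mod_cast hlow
        simp only [hg]; linarith
      · rw [if_neg (by omega), if_neg (by omega)]
        have hlow : j ≤ gN u := by
          simp only [hgN]; omega
        have hcast : (j : ℝ) ≤ (gN u : ℝ) := by exact_mod_cast hlow
        simp only [hg]; linarith
    -- Laplacian bounds
    have hLapz : graphLap G g z ≤ 1 - j * κ := by
      have hsum : ∑ w ∈ G.neighborFinset z, (g w - g z) ≤ (1 - j * κ) * G.degree z := by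
        calc ∑ w ∈ G.neighborFinset z, (g w - g z)
            ≤ ∑ w ∈ G.neighborFinset z,
                (if G.dist x w = j + 1 then (1:ℝ) else if G.dist x w = j then 1 else -1) :=
              Finset.sum_le_sum hpt_z
          _ = _ := indicator_sum G x z j hmem_z
          _ ≤ (1 - j * κ) * G.degree z := ih z hxz
      unfold graphLap
      calc (G.degree z : ℝ)⁻¹ * ∑ w ∈ G.neighborFinset z, (g w - g z)
          ≤ (G.degree z : ℝ)⁻¹ * ((1 - j * κ) * G.degree z) :=
            mul_le_mul_of_nonneg_left hsum (by positivity)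
        _ = 1 - j * κ := by field_simp
    have hLapy : (G.degree y : ℝ)⁻¹ *
        ((((G.neighborFinset y).filter fun u => G.dist x u = (j + 1) + 1).card : ℝ)
          + (((G.neighborFinset y).filter fun u => G.dist x u = j + 1).card : ℝ)
          - (((G.neighborFinset y).filter fun u => G.dist x u + 1 = j + 1).card : ℝ))
        ≤ graphLap G g y := by
      have hsum : (((G.neighborFinset y).filter fun u => G.dist x u = (j + 1) + 1).card : ℝ)
          + (((G.neighborFinset y).filter fun u => G.dist x u = j + 1).card : ℝ)
          - (((G.neighborFinset y).filter fun u => G.dist x u + 1 = j + 1).card : ℝ)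
          ≤ ∑ u ∈ G.neighborFinset y, (g u - g y) := by
        calc (((G.neighborFinset y).filter fun u => G.dist x u = (j + 1) + 1).card : ℝ)
            + (((G.neighborFinset y).filter fun u => G.dist x u = j + 1).card : ℝ)
            - (((G.neighborFinset y).filter fun u => G.dist x u + 1 = j + 1).card : ℝ)
            = ∑ u ∈ G.neighborFinset y,
                (if G.dist x u = (j + 1) + 1 then (1:ℝ)
                  else if G.dist x u = j + 1 then 1 else -1) :=
              (indicator_sum G x y (j + 1) hmem_y).symm
          _ ≤ ∑ u ∈ G.neighborFinset y, (g u - g y) := Finset.sum_le_sum hpt_y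
      unfold graphLap
      exact mul_le_mul_of_nonneg_left hsum (by positivity)
    -- curvature application
    have hval : g y - g z = (G.dist z y : ℝ) := by
      simp only [hg]
      rw [hgy, hgz, hdzy]
      push_cast; ring
    have hbdd : BddBelow { r : ℝ | ∃ f : V → ℝ, IsLip1 G f ∧ f y - f z = G.dist z y ∧
        r = (graphLap G f z - graphLap G f y) / G.dist z y } := by
      refine ⟨-2, ?_⟩
      rintro r ⟨f, hf, -, rfl⟩
      have h1 := abs_le.mp (abs_graphLap_le_one G f hf z)
      have h2 := abs_le.mp (abs_graphLap_le_one G f hf y)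
      rw [hdzy]
      push_cast
      rw [div_one]
      linarith [h1.1, h2.2]
    have hmem_set : (graphLap G g z - graphLap G g y) / (G.dist z y : ℝ) ∈
        { r : ℝ | ∃ f : V → ℝ, IsLip1 G f ∧ f y - f z = G.dist z y ∧
          r = (graphLap G f z - graphLap G f y) / G.dist z y } :=
      ⟨g, hLip, hval, rfl⟩
    have hk1 : κ ≤ (graphLap G g z - graphLap G g y) / (G.dist z y : ℝ) := by
      refine le_trans (hcurv z y hzy) ?_
      unfold kappaLLY
      exact csInf_le hbdd hmem_set
    rw [hdzy] at hk1
    push_cast at hk1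
    rw [div_one] at hk1
    -- combine
    have h6 : (G.degree y : ℝ)⁻¹ *
        ((((G.neighborFinset y).filter fun u => G.dist x u = (j + 1) + 1).card : ℝ)
          + (((G.neighborFinset y).filter fun u => G.dist x u = j + 1).card : ℝ)
          - (((G.neighborFinset y).filter fun u => G.dist x u + 1 = j + 1).card : ℝ))
        ≤ 1 - (j + 1) * κ := by linarith
    have h7 := mul_le_mul_of_nonneg_left h6 hdegy'.le
    rw [← mul_assoc, mul_inv_cancel₀ (ne_of_gt hdegy'), one_mul] at h7
    calc (((G.neighborFinset y).filter fun u => G.dist x u = j + 1 + 1).card : ℝ)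
        + (((G.neighborFinset y).filter fun u => G.dist x u = j + 1).card : ℝ)
        - (((G.neighborFinset y).filter fun u => G.dist x u + 1 = j + 1).card : ℝ)
        ≤ (G.degree y : ℝ) * (1 - ((j:ℝ) + 1) * κ) := h7
      _ = (1 - ((j + 1 : ℕ) : ℝ) * κ) * G.degree y := by push_cast; ring

theorem gamma_bound_C3C5_free {V : Type*} [Fintype V] (G : SimpleGraph V)
    [DecidableRel G.Adj] (hconn : G.Connected)
    (h3 : ¬ HasCycleLen G 3) (h5 : ¬ HasCycleLen G 5)
    (κ : ℝ) (hκ : 0 < κ)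
    (hcurv : ∀ u v : V, G.Adj u v → κ ≤ kappaLLY G u v)
    (x y : V) (i : ℕ) (hi : 1 ≤ i) (hdist : G.dist x y = i) :
    ((((G.neighborFinset y).filter fun u => G.dist x u = G.dist x y + 1).card : ℝ)
      + (((G.neighborFinset y).filter fun u => G.dist x u = G.dist x y).card : ℝ))
      ≤ (1 - i * κ / 2) * G.degree y := by
  have hkey := key_lemma G hconn h3 h5 κ hκ hcurv x i y hdist
  simp only [hdist]
  have hmem_y := neighbor_dist_cases G hconn x y i hdist
  have hpart : (G.degree y : ℝ) =
      (((G.neighborFinset y).filter fun u => G.dist x u = i + 1).card : ℝ)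
      + (((G.neighborFinset y).filter fun u => G.dist x u = i).card : ℝ)
      + (((G.neighborFinset y).filter fun u => G.dist x u + 1 = i).card : ℝ) := by
    have h1 : ∀ u ∈ G.neighborFinset y, (1:ℝ) =
        (if G.dist x u = i + 1 then (1:ℝ) else 0) + (if G.dist x u = i then (1:ℝ) else 0)
          + (if G.dist x u + 1 = i then (1:ℝ) else 0) := by
      intro u hu
      rcases hmem_y u hu with h | h | h <;>
        · split_ifs <;> first | (exfalso; omega) | norm_num
    calc (G.degree y : ℝ) = ∑ _u ∈ G.neighborFinset y, (1:ℝ) := by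
          simp [SimpleGraph.card_neighborFinset_eq_degree]
      _ = ∑ u ∈ G.neighborFinset y,
            ((if G.dist x u = i + 1 then (1:ℝ) else 0) + (if G.dist x u = i then (1:ℝ) else 0)
              + (if G.dist x u + 1 = i then (1:ℝ) else 0)) := Finset.sum_congr rfl h1
      _ = _ := by
          rw [Finset.sum_add_distrib, Finset.sum_add_distrib]
          simp [Finset.sum_boole]
  nlinarith [hkey, hpart]

end
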